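/- arXiv:2210.14467 — 5 statements merged into one kernel-verified Lean document; each statement's English description precedes it below -/
import Mathlib

section
/- Let H be a real inner product space, let δ, m, h ∈ H with ⟨δ, m⟩ = ‖δ‖², and let ((β_ι), (v_ι), B) be an ℓ¹-representation of h by unit vectors with B > 0. Then (‖δ‖² − ‖m − h‖²) / (2B) ≤ sup_{ι∈ℕ} |⟨δ, v_ι⟩|, where the supremum is finite because |⟨δ, v_ι⟩| ≤ ‖δ‖ for every ι by the Cauchy–Schwarz inequality. -/
open scoped RealInnerProductSpace

/-- Inequality (Math22) in the proof of Theorem 2: if `δ` is a residual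
(`⟪δ, m⟫ = ‖δ‖²`) and `h` has an ℓ¹-representation `h = Σ β_ι v_ι` by unit vectors
with `Σ β_ι = B > 0`, then `(‖δ‖² - ‖m - h‖²) / (2B) ≤ sup_ι |⟪δ, v_ι⟫|`. -/
theorem stmt2 {H : Type*} [NormedAddCommGroup H] [InnerProductSpace ℝ H]
    (δ m h : H) (hδm : ⟪δ, m⟫ = ‖δ‖ ^ 2)
    (β : ℕ → ℝ) (v : ℕ → H) (B : ℝ)
    (hβ : ∀ ι, 0 ≤ β ι) (hBsum : HasSum β B) (hv : ∀ ι, ‖v ι‖ = 1)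
    (hrep : HasSum (fun ι => β ι • v ι) h) (hBpos : 0 < B) :
    (‖δ‖ ^ 2 - ‖m - h‖ ^ 2) / (2 * B) ≤ ⨆ ι : ℕ, |⟪δ, v ι⟫| := by
  set S := ⨆ ι : ℕ, |⟪δ, v ι⟫| with hS
  have hbdd : BddAbove (Set.range fun ι : ℕ => |⟪δ, v ι⟫|) := by
    refine ⟨‖δ‖, ?_⟩
    rintro x ⟨ι, rfl⟩
    calc |⟪δ, v ι⟫| ≤ ‖δ‖ * ‖v ι‖ := abs_real_inner_le_norm δ (v ι)
    _ = ‖δ‖ := by rw [hv ι, mul_one]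
  have hle : ∀ ι, |⟪δ, v ι⟫| ≤ S := fun ι => le_ciSup hbdd ι
  -- inner product with h
  have hsum1 : HasSum (fun ι => ⟪δ, β ι • v ι⟫) ⟪δ, h⟫ :=
    (innerSL ℝ δ).hasSum hrep
  have hsum1' : HasSum (fun ι => β ι * ⟪δ, v ι⟫) ⟪δ, h⟫ := by
    simpa [real_inner_smul_right] using hsum1
  have hsum2 : HasSum (fun ι => β ι * S) (B * S) := hBsum.mul_right S
  have hih : ⟪δ, h⟫ ≤ B * S := by
    refine hasSum_le (fun ι => ?_) hsum1' hsum2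
    calc β ι * ⟪δ, v ι⟫ ≤ β ι * |⟪δ, v ι⟫| :=
          mul_le_mul_of_nonneg_left (le_abs_self _) (hβ ι)
    _ ≤ β ι * S := mul_le_mul_of_nonneg_left (hle ι) (hβ ι)
  -- key geometric inequality
  have hcs : ⟪δ, m - h⟫ ≤ ‖δ‖ * ‖m - h‖ := real_inner_le_norm δ (m - h)
  have hexp : ⟪δ, m - h⟫ = ‖δ‖ ^ 2 - ⟪δ, h⟫ := by
    rw [inner_sub_right, hδm]
  have hkey : ‖δ‖ ^ 2 - ‖m - h‖ ^ 2 ≤ 2 * ⟪δ, h⟫ := by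
    nlinarith [sq_nonneg (‖δ‖ - ‖m - h‖)]
  rw [div_le_iff₀ (by positivity)]
  nlinarith
end

section
/- Let H be a real inner product space, let m, m' ∈ H, let α ∈ [0, 1], and let ((β_ι), (v_ι), B) be an ℓ¹-representation of h ∈ H by unit vectors. Then the series Σ_{ι=0}^∞ β_ι · ‖m − α·m' − ((1 − α)·B)·v_ι‖² converges and Σ_{ι=0}^∞ β_ι · ‖m − α·m' − ((1 − α)·B)·v_ι‖² ≤ B · ( α·‖m − m'‖² + (1 − α)·‖m − h‖² + (1 − α)²·B² ). -/
open RealInnerProductSpace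


/-- The weighted-average one-step bound (from (RGAproof2a)–(RGAproof2c)) used in the
relaxed-greedy part of the proof of Theorem 2: for `h` with ℓ¹-representation
`h = Σ β_ι v_ι` by unit vectors with `Σ β_ι = B`, and any `α ∈ [0,1]`,
`Σ_ι β_ι ‖m - α m' - (1-α)B v_ι‖² ≤ B (α‖m - m'‖² + (1-α)‖m - h‖² + (1-α)²B²)`. -/
theorem stmt3 {H : Type*} [NormedAddCommGroup H] [InnerProductSpace ℝ H]
    (m m' h : H) (α : ℝ) (hα0 : 0 ≤ α) (hα1 : α ≤ 1)
    (β : ℕ → ℝ) (v : ℕ → H) (B : ℝ)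
    (hβ : ∀ ι, 0 ≤ β ι) (hBsum : HasSum β B) (hv : ∀ ι, ‖v ι‖ = 1)
    (hrep : HasSum (fun ι => β ι • v ι) h) :
    Summable (fun ι => β ι * ‖m - α • m' - ((1 - α) * B) • v ι‖ ^ 2) ∧
      ∑' ι, β ι * ‖m - α • m' - ((1 - α) * B) • v ι‖ ^ 2 ≤
        B * (α * ‖m - m'‖ ^ 2 + (1 - α) * ‖m - h‖ ^ 2 + (1 - α) ^ 2 * B ^ 2) := by
  set x : H := m - α • m' with hxdef
  set c : ℝ := (1 - α) * B with hcdef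
  have hB0 : 0 ≤ B := hBsum.nonneg hβ
  -- inner product sum
  have hinner : HasSum (fun ι => β ι * ⟪x, v ι⟫) ⟪x, h⟫ := by
    simpa using hrep.mapL (innerSL ℝ x)
  -- expand each term
  have hterm : ∀ ι, β ι * ‖x - c • v ι‖ ^ 2
      = β ι * (‖x‖ ^ 2 + c ^ 2) - 2 * c * (β ι * ⟪x, v ι⟫) := by
    intro ι
    have h1 : ‖x - c • v ι‖ ^ 2 = ‖x‖ ^ 2 - 2 * ⟪x, c • v ι⟫ + ‖c • v ι‖ ^ 2 := by
      rw [← norm_sub_sq_real]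
    have h2 : ‖c • v ι‖ ^ 2 = c ^ 2 := by
      rw [norm_smul, hv ι, mul_one, Real.norm_eq_abs, sq_abs]
    have h3 : ⟪x, c • v ι⟫ = c * ⟪x, v ι⟫ := real_inner_smul_right x (v ι) c
    rw [h1, h2, h3]; ring
  have hsum : HasSum (fun ι => β ι * ‖x - c • v ι‖ ^ 2)
      (B * (‖x‖ ^ 2 + c ^ 2) - 2 * c * ⟪x, h⟫) := by
    have := (hBsum.mul_right (‖x‖ ^ 2 + c ^ 2)).sub (hinner.mul_left (2 * c))
    simp only [hterm]; exact this
  refine ⟨hsum.summable, ?_⟩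
  rw [hsum.tsum_eq]
  -- the remaining real inequality
  have hm'e : ‖m - m'‖ ^ 2 = ‖m‖ ^ 2 - 2 * ⟪m, m'⟫ + ‖m'‖ ^ 2 := by
    rw [← norm_sub_sq_real]
  have hmhe : ‖m - h‖ ^ 2 = ‖m‖ ^ 2 - 2 * ⟪m, h⟫ + ‖h‖ ^ 2 := by
    rw [← norm_sub_sq_real]
  have hxe : ‖x‖ ^ 2 = ‖m‖ ^ 2 - 2 * (α * ⟪m, m'⟫) + α ^ 2 * ‖m'‖ ^ 2 := by
    rw [hxdef] at *
    rw [norm_sub_sq_real, real_inner_smul_right, norm_smul,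
      Real.norm_eq_abs, mul_pow, sq_abs]
  have hxhe : ⟪x, h⟫ = ⟪m, h⟫ - α * ⟪m', h⟫ := by
    rw [hxdef, inner_sub_left, real_inner_smul_left]
  have hm'he : ‖m' - h‖ ^ 2 = ‖m'‖ ^ 2 - 2 * ⟪m', h⟫ + ‖h‖ ^ 2 := by
    rw [← norm_sub_sq_real]
  have h1 : (0:ℝ) ≤ ‖m' - h‖ ^ 2 := sq_nonneg _
  have h2 : (0:ℝ) ≤ ‖h‖ ^ 2 := sq_nonneg _
  rw [hcdef, hxe, hxhe, hm'e, hmhe]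
  nlinarith [mul_nonneg (mul_nonneg (mul_nonneg hB0 (sub_nonneg.2 hα1)) hα0)
      (hm'he ▸ h1 : (0:ℝ) ≤ ‖m'‖ ^ 2 - 2 * ⟪m', h⟫ + ‖h‖ ^ 2),
    mul_nonneg (mul_nonneg (mul_nonneg hB0 (sub_nonneg.2 hα1)) (sub_nonneg.2 hα1)) h2]
end

section
/- Let H be a real inner product space, m ∈ H, and let (m_k)_{k≥0} be a sequence in H with m_0 = 0; write δ_k = m − m_k. Let ((β_ι), (v_ι), B) be an ℓ¹-representation of h ∈ H by unit vectors with B > 0. Assume: (i) ⟨m − m_k, m_k⟩ = 0 for every k ≥ 0, and (ii) for every k ≥ 1 and every ι ∈ ℕ, ‖δ_k‖² ≤ ‖δ_{k-1}‖² − ⟨δ_{k-1}, v_ι⟩². Then for every k ≥ 1, ‖m − m_k‖² ≤ ‖m − h‖² + 4B² / (k + 1). -/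
open scoped RealInnerProductSpace

/-- Deterministic core of Theorem 2 (for rPPR.oga and rPPR.aga): if `m_0 = 0`, each
residual `δ_k = m - m_k` is orthogonal to `m_k`, and each greedy step reduces the
squared residual by at least the squared inner product with every dictionary element
`v_ι` of an ℓ¹-representation `h = Σ β_ι v_ι` (unit vectors, `Σ β_ι = B > 0`), then
`‖m - m_k‖² ≤ ‖m - h‖² + 4B²/(k+1)` for every `k ≥ 1`. -/
theorem stmt5 {H : Type*} [NormedAddCommGroup H] [InnerProductSpace ℝ H]
    (m : H) (M : ℕ → H) (hM0 : M 0 = 0)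
    (h : H) (β : ℕ → ℝ) (v : ℕ → H) (B : ℝ)
    (hβ : ∀ ι, 0 ≤ β ι) (hBsum : HasSum β B) (hv : ∀ ι, ‖v ι‖ = 1)
    (hrep : HasSum (fun ι => β ι • v ι) h) (hBpos : 0 < B)
    (horth : ∀ k : ℕ, ⟪m - M k, M k⟫ = 0)
    (hstep : ∀ k : ℕ, 1 ≤ k → ∀ ι : ℕ,
      ‖m - M k‖ ^ 2 ≤ ‖m - M (k - 1)‖ ^ 2 - ⟪m - M (k - 1), v ι⟫ ^ 2) :
    ∀ k : ℕ, 1 ≤ k → ‖m - M k‖ ^ 2 ≤ ‖m - h‖ ^ 2 + 4 * B ^ 2 / ((k : ℝ) + 1) := by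
  set e : ℕ → ℝ := fun k => ‖m - M k‖ ^ 2 - ‖m - h‖ ^ 2 with he
  have hB2 : (0:ℝ) < 4 * B ^ 2 := by positivity
  -- inner product with h is the sum
  have hS : ∀ g : H, HasSum (fun ι => β ι * ⟪g, v ι⟫) ⟪g, h⟫ := by
    intro g
    have := (innerSL ℝ g).hasSum hrep
    simpa [real_inner_smul_right] using this
  -- existence of a good direction
  have hdir : ∀ g : H, ∃ ι, ⟪g, h⟫ ≤ B * ⟪g, v ι⟫ := by
    intro g
    by_contra hc
    push_neg at hc
    obtain ⟨ι₀, hι₀⟩ : ∃ ι, 0 < β ι := by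
      by_contra hz
      push_neg at hz
      have hβ0 : β = 0 := funext fun ι => le_antisymm (hz ι) (hβ ι)
      rw [hβ0] at hBsum
      have := hBsum.unique hasSum_zero
      linarith
    have hlt : ∀ ι, β ι * ⟪g, v ι⟫ ≤ β ι * (⟪g, h⟫ / B) := by
      intro ι
      rcases eq_or_lt_of_le (hβ ι) with hb | hb
      · simp [← hb]
      · have h1 := hc ι
        have h2 : ⟪g, v ι⟫ ≤ ⟪g, h⟫ / B := by
          rw [le_div_iff₀ hBpos]; nlinarith
        exact mul_le_mul_of_nonneg_left h2 (hβ ι)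
    have hstrict : β ι₀ * ⟪g, v ι₀⟫ < β ι₀ * (⟪g, h⟫ / B) := by
      have h1 := hc ι₀
      have h2 : ⟪g, v ι₀⟫ < ⟪g, h⟫ / B := by
        rw [lt_div_iff₀ hBpos]; nlinarith
      exact mul_lt_mul_of_pos_left h2 hι₀
    have hsum2 : HasSum (fun ι => β ι * (⟪g, h⟫ / B)) (B * (⟪g, h⟫ / B)) :=
      hBsum.mul_right _
    have := hasSum_lt (i := ι₀) hlt hstrict (hS g) hsum2
    rw [mul_div_cancel₀ _ hBpos.ne'] at this
    exact lt_irrefl _ this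
  -- e k ≤ 2⟪δ_k, h⟫
  have horthE : ∀ k, e k ≤ 2 * ⟪m - M k, h⟫ := by
    intro k
    have hexp : ‖m - h‖ ^ 2 = ‖m - M k‖ ^ 2 - 2 * ⟪m - M k, h⟫ + ‖h - M k‖ ^ 2 := by
      have hd : m - h = (m - M k) - (h - M k) := by abel
      rw [hd, @norm_sub_sq_real, inner_sub_right, horth k]
      ring
    have hnn : (0:ℝ) ≤ ‖h - M k‖ ^ 2 := by positivity
    simp only [he]
    linarith
  -- monotonicity
  have hmono : ∀ k : ℕ, 1 ≤ k → e k ≤ e (k - 1) := by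
    intro k hk
    have h1 := hstep k hk 0
    have h0 : (0:ℝ) ≤ ⟪m - M (k-1), v 0⟫ ^ 2 := sq_nonneg _
    simp only [he]
    linarith
  -- recursion
  have hrec : ∀ k : ℕ, 1 ≤ k → 0 ≤ e (k - 1) →
      e k ≤ e (k - 1) - (e (k - 1)) ^ 2 / (4 * B ^ 2) := by
    intro k hk hpos
    set g := m - M (k - 1) with hg
    obtain ⟨ι, hι⟩ := hdir g
    have h1 : e (k-1) ≤ 2 * ⟪g, h⟫ := horthE (k-1)
    have hgh : 0 ≤ ⟪g, h⟫ := by linarith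
    have hc2 : (e (k-1))^2 / (4 * B ^ 2) ≤ ⟪g, v ι⟫ ^ 2 := by
      rw [div_le_iff₀ hB2]
      nlinarith [sq_nonneg (⟪g,h⟫ - B * ⟪g, v ι⟫), sq_nonneg ⟪g, v ι⟫]
    have h2 := hstep k hk ι
    simp only [he]
    rw [← hg] at h2 ⊢
    linarith
  -- main induction
  have main : ∀ k : ℕ, 1 ≤ k → e k ≤ 4 * B ^ 2 / ((k : ℝ) + 1) := by
    intro k hk
    induction k, hk using Nat.le_induction with
    | base =>
      have heq : ((1:ℕ):ℝ) + 1 = 2 := by norm_num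
      rw [heq]
      have h2 : 4 * B ^ 2 / (2:ℝ) = 2 * B ^ 2 := by ring
      rw [h2]
      rcases le_or_gt 0 (e 0) with h0 | h0
      · have hr := hrec 1 le_rfl (by simpa using h0)
        simp only [Nat.sub_self] at hr
        have hb : e 0 - (e 0)^2 / (4 * B^2) ≤ B ^ 2 := by
          rw [sub_le_iff_le_add, ← sub_le_iff_le_add', ← sub_nonneg]
          have : (e 0)^2 / (4 * B^2) - (e 0 - B^2)
              = (e 0 - 2*B^2)^2 / (4 * B^2) := by
            field_simp; ring
          rw [this]; positivity
        have h3 : e 1 ≤ B ^ 2 := le_trans hr hb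
        linarith [sq_nonneg B]
      · have hm := hmono 1 le_rfl
        simp only [Nat.sub_self] at hm
        nlinarith
    | succ k hk ih =>
      have hsub : (k + 1) - 1 = k := rfl
      have hkr : (1:ℝ) ≤ (k:ℝ) := by exact_mod_cast hk
      have hden1 : (0:ℝ) < (k:ℝ) + 1 := by linarith
      have hden2 : (0:ℝ) < (k:ℝ) + 1 + 1 := by linarith
      have hcast : ((k+1:ℕ):ℝ) + 1 = (k:ℝ) + 1 + 1 := by push_cast; ring
      rw [hcast]
      rcases le_or_gt 0 (e k) with h0 | h0
      · have hr := hrec (k+1) (by omega) (by simpa [hsub] using h0)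
        rw [hsub] at hr
        -- clear denominators
        set x := e k with hx
        set t : ℝ := (k:ℝ) + 1 + 1 with htdef
        have ht2 : (2:ℝ) ≤ t := by simp only [htdef]; linarith
        have ht0 : (0:ℝ) < t := by linarith
        have ihx : x * (t - 1) ≤ 4 * B ^ 2 := by
          have := (le_div_iff₀ hden1).mp ih
          have htt : t - 1 = (k:ℝ) + 1 := by simp only [htdef]; ring
          rw [htt]; linarith [this]
        have hy : 0 ≤ 4 * B ^ 2 - x * (t - 1) := by linarith
        have hgoal : x - x ^ 2 / (4 * B ^ 2) ≤ 4 * B ^ 2 / t := by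
          rw [sub_le_iff_le_add, div_add_div _ _ ht0.ne' hB2.ne', le_div_iff₀ (by positivity)]
          nlinarith [sq_nonneg x, sq_nonneg (4 * B ^ 2 - x * (t - 1)),
            mul_nonneg (mul_nonneg (by linarith : (0:ℝ) ≤ t - 2) h0) hy]
        linarith
      · have hm := hmono (k+1) (by omega)
        rw [hsub] at hm
        have hpos : (0:ℝ) < 4 * B ^ 2 / ((k:ℝ) + 1 + 1) := by positivity
        exact le_trans hm (le_trans h0.le hpos.le)
  intro k hk
  have := main k hk
  simp only [he] at this
  linarith
end

section
/- Let p ≥ q ≥ 1 be integers, let Ω be the collection of all q-element subsets of {1,…,p}, a finite set of cardinality N = binom(p,q), and let H be a real inner product space and m ∈ H. For each k ≥ 0 let m_k : Ω^k → H with m_0 = 0 (the constant on the one-point set Ω^0), and write δ_k(ξ) = m − m_k(ξ). Let D : Ω → Set H, let ((β_ι), (v_ι), B) be an ℓ¹-representation of h ∈ H by unit vectors with B > 0, and let c : ℕ → Ω be such that v_ι ∈ D(c(ι)) for every ι. Assume that for every k ≥ 1, every ξ ∈ Ω^{k−1}, and every ω ∈ Ω: (i) ⟨m − m_{k-1}(ξ),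 m_{k-1}(ξ)⟩ = 0; (ii) ‖δ_k(ξ,ω)‖ ≤ ‖δ_{k-1}(ξ)‖; and (iii) for every v ∈ D(ω), ‖δ_k(ξ,ω)‖² ≤ ‖δ_{k-1}(ξ)‖² − ⟨δ_{k-1}(ξ), v⟩². Then for every k ≥ 1, N^{−k} Σ_{ξ∈Ω^k} ‖m − m_k(ξ)‖² ≤ ‖m − h‖² + 4(N·B)² / (k + 1). -/
open scoped RealInnerProductSpace

/-- Recursion lemma: a sequence satisfying `A (k+1) ≤ A k - γ (A k)₊²` with `γ C ≥ 1`
and `A 1 ≤ C/2` satisfies `A k ≤ C/(k+1)`. -/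
lemma stmt6_aux_rec (C γ : ℝ) (hC : 0 < C) (hγC : 1 ≤ γ * C) (A : ℕ → ℝ)
    (h1 : A 1 ≤ C / 2)
    (hstep : ∀ k : ℕ, A (k + 1) ≤ A k - γ * (max (A k) 0) ^ 2) :
    ∀ k : ℕ, 1 ≤ k → A k ≤ C / ((k : ℝ) + 1) := by
  have hγ : 0 < γ := by nlinarith
  intro k hk
  induction k with
  | zero => omega
  | succ n ih =>
    rcases Nat.eq_or_lt_of_le hk with h | h
    · simpa [← h] using h1.trans (by norm_num)
    · have hn : 1 ≤ n := by omega
      have hAn := ih hn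
      have hs := hstep n
      set K : ℝ := (n : ℝ) with hK
      have hK1 : (1 : ℝ) ≤ K := by rw [hK]; exact_mod_cast hn
      have hcast : ((n + 1 : ℕ) : ℝ) + 1 = K + 2 := by push_cast; ring
      rw [hcast]
      rcases le_or_gt (A n) (C / (K + 2)) with hle | hgt
      · have h0 : (0:ℝ) ≤ γ * (max (A n) 0) ^ 2 := by positivity
        linarith
      · have hpos : 0 < A n := lt_of_le_of_lt (by positivity) hgt
        have hmax : max (A n) 0 = A n := max_eq_left hpos.le
        rw [hmax] at hs
        set A0 : ℝ := A n with hA0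
        have h2 : A0 * (K + 1) ≤ C := (le_div_iff₀ (by linarith)).1 hAn
        have h3 : A0 * (K + 1) ≤ C * K := by nlinarith
        have h4 : C * A0 * (K + 1) ^ 2 ≤ C ^ 2 * K + A0 ^ 2 * (K + 1) ^ 2 := by
          nlinarith [mul_nonneg (sub_nonneg.2 h2) (sub_nonneg.2 h3)]
        have h5 : (C * A0 - A0 ^ 2) * (K + 2) * (K + 1) ^ 2 ≤ C ^ 2 * (K + 1) ^ 2 := by
          have e1 : (C * A0 - A0 ^ 2) * (K + 2) * (K + 1) ^ 2
              = (K + 2) * (C * A0 * (K + 1) ^ 2) - (K + 2) * (A0 ^ 2 * (K + 1) ^ 2) := by ring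
          have e2 : (K + 2) * (C * A0 * (K + 1) ^ 2)
              ≤ (K + 2) * (C ^ 2 * K + A0 ^ 2 * (K + 1) ^ 2) :=
            mul_le_mul_of_nonneg_left h4 (by linarith)
          have e3 : (K + 2) * K * C ^ 2 ≤ (K + 1) ^ 2 * C ^ 2 := by nlinarith [sq_nonneg C]
          nlinarith [e2, e3]
        have h6 : (C * A0 - A0 ^ 2) * (K + 2) ≤ C ^ 2 := by
          have hKp : (0:ℝ) < (K + 1) ^ 2 := by positivity
          exact le_of_mul_le_mul_right (by linarith [h5]) hKp
        have hγA : A0 ^ 2 ≤ γ * C * A0 ^ 2 := le_mul_of_one_le_left (sq_nonneg A0) hγC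
        have h7 : C * (A0 - γ * A0 ^ 2) ≤ C * A0 - A0 ^ 2 := by
          have e : C * (A0 - γ * A0 ^ 2) = C * A0 - γ * C * A0 ^ 2 := by ring
          rw [e]; linarith
        have h9 : C * ((A0 - γ * A0 ^ 2) * (K + 2)) ≤ C * C := by
          calc C * ((A0 - γ * A0 ^ 2) * (K + 2)) = (C * (A0 - γ * A0 ^ 2)) * (K + 2) := by ring
            _ ≤ (C * A0 - A0 ^ 2) * (K + 2) := mul_le_mul_of_nonneg_right h7 (by linarith)
            _ ≤ C ^ 2 := h6
            _ = C * C := by ring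
        have h10 : (A0 - γ * A0 ^ 2) * (K + 2) ≤ C := le_of_mul_le_mul_left h9 hC
        rw [le_div_iff₀ (by linarith : (0:ℝ) < K + 2)]
        calc A (n + 1) * (K + 2) ≤ (A0 - γ * A0 ^ 2) * (K + 2) :=
              mul_le_mul_of_nonneg_right hs (by linarith)
          _ ≤ C := h10

/-- One-step estimate over a single coordinate: averaging the squared residual over
the dictionary choices improves by the square of the current excess. -/
lemma stmt6_step_aux {H : Type*} [NormedAddCommGroup H] [InnerProductSpace ℝ H]
    {Ω : Type*} [Fintype Ω] [DecidableEq Ω] (m h δ : H) (f : Ω → ℝ)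
    (horth : ⟪δ, m - δ⟫ = 0)
    (β : ℕ → ℝ) (v : ℕ → H) (B : ℝ)
    (hβ : ∀ ι, 0 ≤ β ι) (hBsum : HasSum β B)
    (hrep : HasSum (fun ι => β ι • v ι) h) (hBpos : 0 < B)
    (c : ℕ → Ω)
    (hmono : ∀ ω : Ω, f ω ≤ ‖δ‖ ^ 2)
    (hstep : ∀ ι : ℕ, f (c ι) ≤ ‖δ‖ ^ 2 - ⟪δ, v ι⟫ ^ 2) :
    ∑ ω : Ω, (f ω - ‖m - h‖ ^ 2) ≤
      (Fintype.card Ω : ℝ) * (‖δ‖ ^ 2 - ‖m - h‖ ^ 2)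
        - (max (‖δ‖ ^ 2 - ‖m - h‖ ^ 2) 0) ^ 2 / (4 * B ^ 2) := by
  set α : ℝ := ‖δ‖ ^ 2 - ‖m - h‖ ^ 2 with hα
  rcases le_or_gt α 0 with hneg | hpos
  · rw [max_eq_right hneg]
    have hb : ∀ ω : Ω, f ω - ‖m - h‖ ^ 2 ≤ α := fun ω => by
      have := hmono ω; rw [hα]; linarith
    calc ∑ ω : Ω, (f ω - ‖m - h‖ ^ 2) ≤ ∑ _ω : Ω, α :=
          Finset.sum_le_sum fun ω _ => hb ω
      _ = (Fintype.card Ω : ℝ) * α := by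
          rw [Finset.sum_const, Finset.card_univ, nsmul_eq_mul]
      _ ≤ _ := by
          have : (0:ℝ) ^ 2 / (4 * B ^ 2) = 0 := by simp
          rw [this]; linarith
  · rw [max_eq_left hpos.le]
    refine le_of_forall_pos_le_add fun ε hε => ?_
    have hδh : α / 2 ≤ ⟪δ, h⟫ := by
      have h1 : ⟪δ, m⟫ = ‖δ‖ ^ 2 := by
        have e : ⟪δ, m⟫ = ⟪δ, δ⟫ + ⟪δ, m - δ⟫ := by
          rw [← inner_add_right]
          congr 1
          abel
        rw [e, horth, real_inner_self_eq_norm_sq]; ring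
      have h2 : ⟪δ, m - h⟫ ≤ ‖δ‖ * ‖m - h‖ := real_inner_le_norm δ (m - h)
      have h3 : ⟪δ, h⟫ = ⟪δ, m⟫ - ⟪δ, m - h⟫ := by
        rw [inner_sub_right]; ring
      rw [hα]
      nlinarith [sq_nonneg (‖δ‖ - ‖m - h‖)]
    have hsum : HasSum (fun ι => β ι * ⟪δ, v ι⟫) ⟪δ, h⟫ := by
      have := (innerSL ℝ δ).hasSum hrep
      simpa [real_inner_smul_right] using this
    set t : ℝ := α / 2 with htdef
    have ht : 0 < t := by rw [htdef]; linarith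
    set ε₀ : ℝ := min (ε * B ^ 2 / (2 * t)) t with hε₀def
    have hε₀pos : 0 < ε₀ := lt_min (by positivity) ht
    have hε₀t : ε₀ ≤ t := min_le_right _ _
    have hm1 : ε₀ * (2 * t) ≤ ε * B ^ 2 :=
      (le_div_iff₀ (by positivity)).1 (min_le_left _ _)
    have hι : ∃ ι : ℕ, (t - ε₀) / B ≤ ⟪δ, v ι⟫ := by
      by_contra hcon
      push_neg at hcon
      have hle : ∀ ι : ℕ, β ι * ⟪δ, v ι⟫ ≤ β ι * ((t - ε₀) / B) := fun ι =>
        mul_le_mul_of_nonneg_left (hcon ι).le (hβ ι)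
      have h2 : HasSum (fun ι : ℕ => β ι * ((t - ε₀) / B)) (B * ((t - ε₀) / B)) :=
        hBsum.mul_right _
      have hle2 := hasSum_le hle hsum h2
      have he : B * ((t - ε₀) / B) = t - ε₀ := by field_simp
      rw [he] at hle2
      linarith
    obtain ⟨ι, hι⟩ := hι
    have h1 : t - ε₀ ≤ B * ⟪δ, v ι⟫ := by
      rw [div_le_iff₀ hBpos] at hι; linarith
    have hq1 : (t - ε₀) ^ 2 ≤ (B * ⟪δ, v ι⟫) ^ 2 :=
      pow_le_pow_left₀ (by linarith) h1 2
    have hfin : t ^ 2 / B ^ 2 - ε ≤ ⟪δ, v ι⟫ ^ 2 := by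
      rw [sub_le_iff_le_add, div_le_iff₀ (by positivity : (0:ℝ) < B ^ 2)]
      nlinarith [sq_nonneg ε₀]
    have hb : ∀ ω : Ω, f ω - ‖m - h‖ ^ 2 ≤
        α + (if ω = c ι then -(⟪δ, v ι⟫ ^ 2) else 0) := by
      intro ω
      by_cases hw : ω = c ι
      · rw [if_pos hw, hw]
        have := hstep ι
        rw [hα]; linarith
      · rw [if_neg hw]
        have := hmono ω
        rw [hα]; linarith
    have ht2 : t ^ 2 / B ^ 2 = α ^ 2 / (4 * B ^ 2) := by
      rw [htdef]; ring
    calc ∑ ω : Ω, (f ω - ‖m - h‖ ^ 2)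
        ≤ ∑ ω : Ω, (α + if ω = c ι then -(⟪δ, v ι⟫ ^ 2) else 0) :=
          Finset.sum_le_sum fun ω _ => hb ω
      _ = (Fintype.card Ω : ℝ) * α - ⟪δ, v ι⟫ ^ 2 := by
          rw [Finset.sum_add_distrib, Finset.sum_const, Finset.card_univ, nsmul_eq_mul,
            Finset.sum_ite_eq' Finset.univ (c ι) fun _ => -(⟪δ, v ι⟫ ^ 2)]
          simp only [Finset.mem_univ, if_true]
          ring
      _ ≤ (Fintype.card Ω : ℝ) * α - α ^ 2 / (4 * B ^ 2) + ε := by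
          rw [← ht2]; linarith

/-- Averaging the pointwise step estimate over all tuples, using Cauchy–Schwarz. -/
lemma stmt6_avg_aux {Ω : Type*} [Fintype Ω] (k : ℕ) (N B : ℝ)
    (hNpos : 0 < N) (hBpos : 0 < B)
    (F : (Fin k → Ω) → ℝ) (G : (Fin (k + 1) → Ω) → ℝ)
    (hcard : (Fintype.card (Fin k → Ω) : ℝ) = N ^ k)
    (hpt : ∀ ξ, ∑ ω : Ω, G (Fin.snoc ξ ω) ≤ N * F ξ - (max (F ξ) 0) ^ 2 / (4 * B ^ 2)) :
    (1 / N ^ (k + 1)) * ∑ ξ' : Fin (k + 1) → Ω, G ξ' ≤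
      (1 / N ^ k) * ∑ ξ : Fin k → Ω, F ξ -
        1 / (4 * N * B ^ 2) * (max ((1 / N ^ k) * ∑ ξ : Fin k → Ω, F ξ) 0) ^ 2 := by
  classical
  have hNk : (0:ℝ) < N ^ k := pow_pos hNpos k
  have hNk1 : (0:ℝ) < N ^ (k + 1) := pow_pos hNpos (k + 1)
  set S : ℝ := ∑ ξ : Fin k → Ω, F ξ with hS
  set T : ℝ := ∑ ξ : Fin k → Ω, (max (F ξ) 0) ^ 2 with hT
  have hsum1 : ∑ ξ' : Fin (k + 1) → Ω, G ξ' =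
      ∑ ξ : Fin k → Ω, ∑ ω : Ω, G (Fin.snoc ξ ω) := by
    rw [← (Fin.snocEquiv (fun _ => Ω)).sum_comp G, Fintype.sum_prod_type, Finset.sum_comm]
    rfl
  have hsum2 : ∑ ξ' : Fin (k + 1) → Ω, G ξ' ≤ N * S - T / (4 * B ^ 2) := by
    calc ∑ ξ' : Fin (k + 1) → Ω, G ξ'
        = ∑ ξ : Fin k → Ω, ∑ ω : Ω, G (Fin.snoc ξ ω) := hsum1
      _ ≤ ∑ ξ : Fin k → Ω, (N * F ξ - (max (F ξ) 0) ^ 2 / (4 * B ^ 2)) :=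
          Finset.sum_le_sum fun ξ _ => hpt ξ
      _ = N * S - T / (4 * B ^ 2) := by
          rw [Finset.sum_sub_distrib, ← Finset.mul_sum, ← Finset.sum_div, hS, hT]
  have hcheb : (max S 0) ^ 2 / N ^ k ≤ T := by
    have h1 : (∑ ξ : Fin k → Ω, max (F ξ) 0) ^ 2
        ≤ N ^ k * ∑ ξ : Fin k → Ω, (max (F ξ) 0) ^ 2 := by
      have h2 := sq_sum_le_card_mul_sum_sq
        (s := (Finset.univ : Finset (Fin k → Ω))) (f := fun ξ => max (F ξ) 0)
      rwa [Finset.card_univ, hcard] at h2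
    have h2 : max S 0 ≤ ∑ ξ : Fin k → Ω, max (F ξ) 0 :=
      max_le (by rw [hS]; exact Finset.sum_le_sum fun ξ _ => le_max_left _ _)
        (Finset.sum_nonneg fun ξ _ => le_max_right _ _)
    have h3 : (max S 0) ^ 2 ≤ (∑ ξ : Fin k → Ω, max (F ξ) 0) ^ 2 :=
      pow_le_pow_left₀ (le_max_right _ _) h2 2
    rw [div_le_iff₀ hNk]
    calc (max S 0) ^ 2 ≤ (∑ ξ : Fin k → Ω, max (F ξ) 0) ^ 2 := h3
      _ ≤ N ^ k * ∑ ξ : Fin k → Ω, (max (F ξ) 0) ^ 2 := h1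
      _ = T * N ^ k := by rw [hT]; exact mul_comm _ _
  have hmax : max ((1 / N ^ k) * S) 0 = max S 0 / N ^ k := by
    rcases le_total S 0 with hS0 | hS0
    · rw [max_eq_right hS0, max_eq_right, zero_div]
      nlinarith [one_div_pos.2 hNk]
    · rw [max_eq_left (by positivity : (0:ℝ) ≤ (1 / N ^ k) * S), max_eq_left hS0]
      ring
  rw [hmax]
  have e : (1 / N ^ k) * S - 1 / (4 * N * B ^ 2) * (max S 0 / N ^ k) ^ 2
      - (1 / N ^ (k + 1)) * (N * S - T / (4 * B ^ 2))
      = (T - (max S 0) ^ 2 / N ^ k) * (1 / (4 * B ^ 2 * N ^ (k + 1))) := by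
    field_simp
    ring
  have h6 : 0 ≤ (T - (max S 0) ^ 2 / N ^ k) * (1 / (4 * B ^ 2 * N ^ (k + 1))) :=
    mul_nonneg (sub_nonneg.2 hcheb) (by positivity)
  have h7 := mul_le_mul_of_nonneg_left hsum2 (le_of_lt (one_div_pos.2 hNk1))
  linarith [e, h6, h7]

/-- The collection `Ω` of all `q`-element subsets of `{1,…,p}`; it is a finite set
of cardinality `binom(p,q)`. -/
abbrev QSubsets (p q : ℕ) : Type := {s : Finset (Fin p) // s.card = q}

/-- Theorem 2 of the paper for rPPR.oga: averaging over uniformly chosen random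
subsets `ξ ∈ Ω^k`, the orthogonal-greedy iterates satisfy
`N^{-k} Σ_ξ ‖m - m_k(ξ)‖² ≤ ‖m - h‖² + 4(N B)²/(k+1)` with `N = binom(p,q)`. -/
theorem stmt6 (p q : ℕ) (hq : 1 ≤ q) (hqp : q ≤ p)
    {H : Type*} [NormedAddCommGroup H] [InnerProductSpace ℝ H]
    (m : H) (M : (k : ℕ) → (Fin k → QSubsets p q) → H)
    (hM0 : ∀ ξ, M 0 ξ = 0)
    (D : QSubsets p q → Set H)
    (h : H) (β : ℕ → ℝ) (v : ℕ → H) (B : ℝ)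
    (hβ : ∀ ι, 0 ≤ β ι) (hBsum : HasSum β B) (hv : ∀ ι, ‖v ι‖ = 1)
    (hrep : HasSum (fun ι => β ι • v ι) h) (hBpos : 0 < B)
    (c : ℕ → QSubsets p q) (hc : ∀ ι, v ι ∈ D (c ι))
    (horth : ∀ (k : ℕ) (ξ : Fin k → QSubsets p q), ⟪m - M k ξ, M k ξ⟫ = 0)
    (hmono : ∀ (k : ℕ) (ξ : Fin k → QSubsets p q) (ω : QSubsets p q),
      ‖m - M (k + 1) (Fin.snoc ξ ω)‖ ≤ ‖m - M k ξ‖)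
    (hstep : ∀ (k : ℕ) (ξ : Fin k → QSubsets p q) (ω : QSubsets p q),
      ∀ u ∈ D ω,
        ‖m - M (k + 1) (Fin.snoc ξ ω)‖ ^ 2 ≤ ‖m - M k ξ‖ ^ 2 - ⟪m - M k ξ, u⟫ ^ 2) :
    ∀ k : ℕ, 1 ≤ k →
      (1 / ((p.choose q : ℝ)) ^ k) * ∑ ξ : Fin k → QSubsets p q, ‖m - M k ξ‖ ^ 2 ≤
        ‖m - h‖ ^ 2 + 4 * ((p.choose q : ℝ) * B) ^ 2 / ((k : ℝ) + 1) := by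
  classical
  have hN0 : 0 < p.choose q := Nat.choose_pos hqp
  set N : ℝ := (p.choose q : ℝ) with hN
  have hN1 : (1 : ℝ) ≤ N := by rw [hN]; exact_mod_cast hN0
  have hNpos : (0 : ℝ) < N := by linarith
  have hcardΩ : (Fintype.card (QSubsets p q) : ℝ) = N := by
    have := Fintype.card_finset_len (α := Fin p) q
    simp only [Fintype.card_fin] at this
    rw [hN, this]
  have hcard : ∀ k : ℕ, (Fintype.card (Fin k → QSubsets p q) : ℝ) = N ^ k := by
    intro k
    rw [Fintype.card_fun]
    push_cast
    simp [hcardΩ, hN]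
  set A : ℕ → ℝ :=
    fun k => (1 / N ^ k) * ∑ ξ : Fin k → QSubsets p q, (‖m - M k ξ‖ ^ 2 - ‖m - h‖ ^ 2)
    with hA
  have hpt : ∀ (k : ℕ) (ξ : Fin k → QSubsets p q),
      ∑ ω : QSubsets p q, (‖m - M (k + 1) (Fin.snoc ξ ω)‖ ^ 2 - ‖m - h‖ ^ 2) ≤
        N * (‖m - M k ξ‖ ^ 2 - ‖m - h‖ ^ 2) -
          (max (‖m - M k ξ‖ ^ 2 - ‖m - h‖ ^ 2) 0) ^ 2 / (4 * B ^ 2) := by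
    intro k ξ
    have h1 := stmt6_step_aux m h (m - M k ξ)
      (fun ω => ‖m - M (k + 1) (Fin.snoc ξ ω)‖ ^ 2)
      (by simpa [sub_sub_cancel] using horth k ξ)
      β v B hβ hBsum hrep hBpos c
      (fun ω => pow_le_pow_left₀ (norm_nonneg _) (hmono k ξ ω) 2)
      (fun ι => hstep k ξ (c ι) (v ι) (hc ι))
    rw [hcardΩ] at h1
    exact h1
  have keyA : ∀ k : ℕ, A (k + 1) ≤ A k - 1 / (4 * N * B ^ 2) * (max (A k) 0) ^ 2 := by
    intro k
    simp only [hA]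
    exact stmt6_avg_aux k N B hNpos hBpos
      (fun ξ => ‖m - M k ξ‖ ^ 2 - ‖m - h‖ ^ 2)
      (fun ξ' => ‖m - M (k + 1) ξ'‖ ^ 2 - ‖m - h‖ ^ 2)
      (hcard k) (hpt k)
  have hC : (0:ℝ) < 4 * (N * B) ^ 2 := by positivity
  have hγC : 1 ≤ (1 / (4 * N * B ^ 2)) * (4 * (N * B) ^ 2) := by
    have e : (1 / (4 * N * B ^ 2)) * (4 * (N * B) ^ 2) = N := by
      field_simp
    rw [e]; exact hN1
  have hA1 : A 1 ≤ 4 * (N * B) ^ 2 / 2 := by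
    have h0 := keyA 0
    set x : ℝ := max (A 0) 0 with hx
    have hxA : A 0 ≤ x := le_max_left _ _
    have hx0 : (0:ℝ) ≤ x := le_max_right _ _
    have h4 : (0:ℝ) < 4 * N * B ^ 2 := by positivity
    have expand : N * B ^ 2 - (x - 1 / (4 * N * B ^ 2) * x ^ 2)
        = (x - 2 * N * B ^ 2) ^ 2 / (4 * N * B ^ 2) := by
      field_simp
      ring
    have hd : (0:ℝ) ≤ (x - 2 * N * B ^ 2) ^ 2 / (4 * N * B ^ 2) :=
      div_nonneg (sq_nonneg _) h4.le
    have h5 : x - 1 / (4 * N * B ^ 2) * x ^ 2 ≤ N * B ^ 2 := by linarith [expand, hd]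
    have hmono2 : A 0 - 1 / (4 * N * B ^ 2) * x ^ 2 ≤ x - 1 / (4 * N * B ^ 2) * x ^ 2 := by
      linarith
    have hNB : N * B ^ 2 ≤ 4 * (N * B) ^ 2 / 2 := by
      nlinarith [mul_nonneg (mul_nonneg hNpos.le (sub_nonneg.2 hN1)) (sq_nonneg B)]
    linarith [h0, hmono2, h5, hNB]
  have main := stmt6_aux_rec (4 * (N * B) ^ 2) (1 / (4 * N * B ^ 2)) hC hγC A hA1 keyA
  intro k hk
  have hAk := main k hk
  have hNk : (0:ℝ) < N ^ k := pow_pos hNpos k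
  have hexp : A k = (1 / N ^ k) * ∑ ξ : Fin k → QSubsets p q, ‖m - M k ξ‖ ^ 2
      - ‖m - h‖ ^ 2 := by
    simp only [hA]
    rw [Finset.sum_sub_distrib, Finset.sum_const, Finset.card_univ, nsmul_eq_mul,
      hcard k, mul_sub]
    congr 1
    field_simp
  rw [hexp] at hAk
  linarith [hAk]
end

section
/- Let H be a real inner product space, m ∈ H, and let (m_k)_{k≥0} be a sequence in H with m_0 = 0; set α_k = 1 − 2/(k+2) for k ≥ 1. Let ((β_ι), (v_ι), B) be an ℓ¹-representation of h ∈ H by unit vectors with B > 0. Assume: (i) ‖m‖² ≤ ‖m − h‖² + 4B², and (ii) for every k ≥ 1 and every ι ∈ ℕ, ‖m − m_k‖ ≤ ‖m − α_k·m_{k-1} − ((1 − α_k)·B)·v_ι‖. Then for every k ≥ 0, ‖m − m_k‖² ≤ ‖m − h‖² + 4B² / (k + 1). -/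
open scoped RealInnerProductSpace

private lemma stmt7_convex {H : Type*} [NormedAddCommGroup H] [InnerProductSpace ℝ H]
    (α : ℝ) (hα : 0 ≤ α) (hα1 : α ≤ 1) (a b : H) :
    ‖α • a + (1 - α) • b‖ ^ 2 ≤ α * ‖a‖ ^ 2 + (1 - α) * ‖b‖ ^ 2 := by
  have hexp : ‖α • a + (1 - α) • b‖ ^ 2
      = α ^ 2 * ‖a‖ ^ 2 + 2 * (α * (1 - α)) * ⟪a, b⟫ + (1 - α) ^ 2 * ‖b‖ ^ 2 := by
    rw [← real_inner_self_eq_norm_sq, ← real_inner_self_eq_norm_sq,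
      ← real_inner_self_eq_norm_sq, real_inner_add_add_self, real_inner_smul_left,
      real_inner_smul_left, real_inner_smul_left, real_inner_smul_right,
      real_inner_smul_right, real_inner_smul_right]
    ring
  have h1 := real_inner_le_norm a b
  have h2 : 0 ≤ α * (1 - α) := mul_nonneg hα (by linarith)
  nlinarith [sq_nonneg (‖a‖ - ‖b‖), norm_nonneg a, norm_nonneg b]

private lemma stmt7_good {H : Type*} [NormedAddCommGroup H] [InnerProductSpace ℝ H]
    (h : H) (β : ℕ → ℝ) (v : ℕ → H) (B : ℝ) (hβ : ∀ ι, 0 ≤ β ι)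
    (hBsum : HasSum β B) (hrep : HasSum (fun ι => β ι • v ι) h) (hBpos : 0 < B)
    (x : H) : ∃ ι, ⟪x, h⟫ / B ≤ ⟪x, v ι⟫ := by
  by_contra hc
  push_neg at hc
  have hBne : B ≠ 0 := hBpos.ne'
  have hinner : HasSum (fun ι => β ι * ⟪x, v ι⟫) ⟪x, h⟫ := by
    have := hrep.mapL (innerSL ℝ x)
    simpa [inner_smul_right] using this
  have hconst : HasSum (fun ι => β ι * (⟪x, h⟫ / B)) ⟪x, h⟫ := by
    have := hBsum.mul_right (⟪x, h⟫ / B)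
    rwa [mul_comm, div_mul_cancel₀ _ hBne] at this
  have hdiff : HasSum (fun ι => β ι * (⟪x, h⟫ / B) - β ι * ⟪x, v ι⟫) 0 := by
    simpa using hconst.sub hinner
  obtain ⟨ι0, hι0⟩ : ∃ ι, 0 < β ι := by
    by_contra h'
    push_neg at h'
    have hz : β = fun _ => 0 := funext fun ι => le_antisymm (h' ι) (hβ ι)
    have : B = 0 := (hz ▸ hBsum).unique hasSum_zero
    linarith
  have hle := le_hasSum hdiff ι0 (fun i _ => by nlinarith [hc i, hβ i])
  nlinarith [hc ι0]

/-- Deterministic core of the relaxed-greedy part of Theorem 2 (rPPR.rga with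
relaxing coefficients `α_k = 1 - 2/(k+2)`): if `m_0 = 0`, `‖m‖² ≤ ‖m-h‖² + 4B²`,
and each iterate is at least as close to `m` as every competitor
`α_k m_{k-1} + (1-α_k)B v_ι`, then `‖m - m_k‖² ≤ ‖m-h‖² + 4B²/(k+1)` for all `k`. -/
theorem stmt7 {H : Type*} [NormedAddCommGroup H] [InnerProductSpace ℝ H]
    (m : H) (M : ℕ → H) (hM0 : M 0 = 0)
    (h : H) (β : ℕ → ℝ) (v : ℕ → H) (B : ℝ)
    (hβ : ∀ ι, 0 ≤ β ι) (hBsum : HasSum β B) (hv : ∀ ι, ‖v ι‖ = 1)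
    (hrep : HasSum (fun ι => β ι • v ι) h) (hBpos : 0 < B)
    (hbase : ‖m‖ ^ 2 ≤ ‖m - h‖ ^ 2 + 4 * B ^ 2)
    (hstep : ∀ k : ℕ, 1 ≤ k → ∀ ι : ℕ,
      ‖m - M k‖ ≤
        ‖m - (1 - 2 / ((k : ℝ) + 2)) • M (k - 1)
            - ((1 - (1 - 2 / ((k : ℝ) + 2))) * B) • v ι‖) :
    ∀ k : ℕ, ‖m - M k‖ ^ 2 ≤ ‖m - h‖ ^ 2 + 4 * B ^ 2 / ((k : ℝ) + 1) := by
  intro k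
  induction k with
  | zero => simpa [hM0] using hbase
  | succ k ih =>
    set t : ℝ := (k : ℝ) with ht_def
    have ht : 0 ≤ t := Nat.cast_nonneg k
    have ht3 : (0:ℝ) < t + 3 := by linarith
    have ht1 : (0:ℝ) < t + 1 := by linarith
    have ht2 : (0:ℝ) < t + 2 := by linarith
    set α : ℝ := 1 - 2 / (t + 3) with hα_def
    have hα0 : 0 ≤ α := by
      have : 2 / (t + 3) ≤ 1 := by rw [div_le_one ht3]; linarith
      simp only [hα_def]; linarith
    have hα1 : α ≤ 1 := by
      have : 0 < 2 / (t + 3) := by positivity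
      simp only [hα_def]; linarith
    set c : ℝ := (1 - α) * B with hc_def
    have hc0 : 0 ≤ c := mul_nonneg (by linarith) hBpos.le
    set x : H := m - α • M k with hx_def
    obtain ⟨ι, hι⟩ := stmt7_good h β v B hβ hBsum hrep hBpos x
    -- the competitor inequality, squared
    have hcomp := hstep (k + 1) (Nat.le_add_left 1 k) ι
    have hcast : ((k + 1 : ℕ) : ℝ) + 2 = t + 3 := by push_cast [ht_def]; ring
    rw [hcast, Nat.add_sub_cancel] at hcomp
    have hsq : ‖m - M (k + 1)‖ ^ 2 ≤ ‖x - c • v ι‖ ^ 2 := by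
      have : (m - α • M k - ((1 - α) * B) • v ι) = x - c • v ι := by
        rw [hx_def, hc_def]
      have h2 := pow_le_pow_left₀ (norm_nonneg _) hcomp 2
      rwa [this] at h2
    -- expand the competitor norm
    have hnorm2 : ‖x - c • v ι‖ ^ 2 = ‖x‖ ^ 2 - 2 * (c * ⟪x, v ι⟫) + c ^ 2 := by
      rw [norm_sub_sq_real, real_inner_smul_right, norm_smul, hv ι,
        Real.norm_eq_abs, abs_of_nonneg hc0]
      ring
    -- use the good direction
    have h3 : ‖x‖ ^ 2 - 2 * (c * ⟪x, v ι⟫) + c ^ 2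
        ≤ ‖x‖ ^ 2 - 2 * ((1 - α) * ⟪x, h⟫) + c ^ 2 := by
      have hkey : (1 - α) * ⟪x, h⟫ = c * (⟪x, h⟫ / B) := by
        rw [hc_def]; field_simp
      have := mul_le_mul_of_nonneg_left hι hc0
      rw [hkey]; linarith
    -- complete the square against h
    have h4 : ‖x‖ ^ 2 - 2 * ((1 - α) * ⟪x, h⟫) + c ^ 2
        ≤ ‖x - (1 - α) • h‖ ^ 2 + c ^ 2 := by
      have he : ‖x - (1 - α) • h‖ ^ 2
          = ‖x‖ ^ 2 - 2 * ⟪x, (1 - α) • h⟫ + ‖(1 - α) • h‖ ^ 2 :=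
        norm_sub_sq_real x ((1 - α) • h)
      rw [real_inner_smul_right] at he
      nlinarith [sq_nonneg ‖(1 - α) • h‖]
    -- convexity
    have h5 : x - (1 - α) • h = α • (m - M k) + (1 - α) • (m - h) := by
      rw [hx_def]
      module
    have h6 : ‖x - (1 - α) • h‖ ^ 2 ≤ α * ‖m - M k‖ ^ 2 + (1 - α) * ‖m - h‖ ^ 2 := by
      rw [h5]; exact stmt7_convex α hα0 hα1 _ _
    -- combine with induction hypothesis
    have h7 : α * ‖m - M k‖ ^ 2 ≤ α * (‖m - h‖ ^ 2 + 4 * B ^ 2 / (t + 1)) :=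
      mul_le_mul_of_nonneg_left ih hα0
    have hkey : α * (4 * B ^ 2 / (t + 1)) + c ^ 2 ≤ 4 * B ^ 2 / (t + 2) := by
      have hdiffeq : 4 * B ^ 2 / (t + 2) - (α * (4 * B ^ 2 / (t + 1)) + c ^ 2)
          = 4 * B ^ 2 / ((t + 2) * (t + 3) ^ 2) := by
        rw [hc_def, hα_def]
        field_simp
        ring
      have hpos : 0 ≤ 4 * B ^ 2 / ((t + 2) * (t + 3) ^ 2) := by positivity
      linarith
    have hgoal : α * (‖m - h‖ ^ 2 + 4 * B ^ 2 / (t + 1)) + (1 - α) * ‖m - h‖ ^ 2 + c ^ 2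
        = ‖m - h‖ ^ 2 + (α * (4 * B ^ 2 / (t + 1)) + c ^ 2) := by ring
    have hfin : ((k + 1 : ℕ) : ℝ) + 1 = t + 2 := by push_cast [ht_def]; ring
    rw [hfin]
    clear_value t α c x
    linarith [hsq, hnorm2.le, h3, h4, h6, h7, hkey]
end
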